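/- Lemma (semi-isomorphism): let j ≥ 1 and let ω₀, …, ω_j be positive integers; for 1 ≤ i ≤ j let p_i be the least positive integer α with α·ω_i ∈ ℤω₀ + ⋯ + ℤω_{i−1}. Suppose given nonzero constants c_i ∈ ℂ and nonnegative integers β_{i,0}, …, β_{i,i−1} with β_{i,i'} < p_{i'} for 1 ≤ i' < i and p_i·ω_i = β_{i,0}ω₀ + β_{i,1}ω₁ + ⋯ + β_{i,i−1}ω_{i−1} for every 1 ≤ i ≤ j. Set H_{i+1} := y_i^{p_i} − c_i·x^{β_{i,0}}·y₁^{β_{i,1}} ⋯ y_{i−1}^{β_{i,i−1}} ∈ ℂ[x, y₁, …, y_j]. Then there exist nonzero b₁, …, b_j ∈ ℂ such that the ℂ-algebra homomorphism Ψ : ℂ[x, y₁, …, y_j] → ℂ[t] with Ψ(x) = t^{ω₀} and Ψ(y_i) = b_i·t^{ω_i} has kernel equal to the ideal generated by H₂, …, H_{j+1} and range equal to the ℂ-subalgebra of ℂ[t] generated by t^{ω₀}, …, t^{ω_j}; in particular ℂ[x, y₁, …, y_j]/(H₂, …, H_{j+1}) is isomorphic as a ℂ-algebra to ℂ[t^{ω₀},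 …, t^{ω_j}]. -/

import Mathlib

noncomputable section

open Finset

namespace SgpAux

variable (j : ℕ)

/-- The algebra map `x ↦ b₀ t^{ω₀}` (with `b₀ = 1`), `yᵢ ↦ bᵢ t^{ωᵢ}`. -/
def Psi (ω : ℕ → ℕ) (b : ℕ → ℂ) : MvPolynomial (Fin (j + 1)) ℂ →ₐ[ℂ] Polynomial ℂ :=
  MvPolynomial.aeval fun i => Polynomial.C (b i.1) * Polynomial.X ^ ω i.1

/-- generic weight of an exponent vector, with weight function `u`. -/
def W (u : ℕ → ℕ) (d : Fin (j + 1) →₀ ℕ) : ℕ := ∑ i : Fin (j + 1), d i * u i.1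

/-- coefficient picked up by a monomial under `Psi`. -/
def B (b : ℕ → ℂ) (d : Fin (j + 1) →₀ ℕ) : ℂ := ∏ i : Fin (j + 1), b i.1 ^ d i

/-- exponent vector of the right-hand monomial of generator `i`. -/
def γ (β : ℕ → ℕ → ℕ) (i : Fin (j + 1)) : Fin (j + 1) →₀ ℕ :=
  Finsupp.equivFunOnFinite.symm fun i' => if i'.1 < i.1 then β i.1 i'.1 else 0

lemma γ_apply (β : ℕ → ℕ → ℕ) (i i' : Fin (j + 1)) :
    γ j β i i' = if i'.1 < i.1 then β i.1 i'.1 else 0 := rfl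

lemma W_add (u : ℕ → ℕ) (d e : Fin (j + 1) →₀ ℕ) :
    W j u (d + e) = W j u d + W j u e := by
  simp [W, Finsupp.add_apply, add_mul, Finset.sum_add_distrib]

lemma W_single (u : ℕ → ℕ) (i : Fin (j + 1)) (k : ℕ) :
    W j u (Finsupp.single i k) = k * u i.1 := by
  rw [W, Finset.sum_eq_single i]
  · simp
  · intro i' _ hne
    simp [Finsupp.single_eq_of_ne' (fun h => hne h.symm)]
  · simp

lemma W_γ (u : ℕ → ℕ) (β : ℕ → ℕ → ℕ) (i : Fin (j + 1)) :
    W j u (γ j β i) = ∑ n ∈ range i.1, β i.1 n * u n := by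
  rw [W]
  have : ∀ i' : Fin (j + 1), γ j β i i' * u i'.1
      = (fun n => (if n < i.1 then β i.1 n else 0) * u n) i'.1 := fun i' => rfl
  rw [Finset.sum_congr rfl fun i' _ => this i',
    Fin.sum_univ_eq_sum_range (fun n => (if n < i.1 then β i.1 n else 0) * u n) (j + 1)]
  rw [← Finset.sum_subset (Finset.range_subset_range.2 (by omega : i.1 ≤ j + 1))
    (fun n _ hn => by
      rw [Finset.mem_range, not_lt] at hn
      simp [Nat.not_lt.2 hn])]
  exact Finset.sum_congr rfl fun n hn => by rw [if_pos (Finset.mem_range.1 hn)]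

lemma B_single (b : ℕ → ℂ) (i : Fin (j + 1)) (k : ℕ) :
    B j b (Finsupp.single i k) = b i.1 ^ k := by
  rw [B, Finset.prod_eq_single i]
  · simp
  · intro i' _ hne
    simp [Finsupp.single_eq_of_ne' (fun h => hne h.symm)]
  · simp

lemma B_γ (b : ℕ → ℂ) (β : ℕ → ℕ → ℕ) (i : Fin (j + 1)) (hij : i.1 ≤ j) :
    B j b (γ j β i) = ∏ n ∈ range i.1, b n ^ β i.1 n := by
  rw [B]
  have : ∀ i' : Fin (j + 1), b i'.1 ^ (γ j β i i')
      = (fun n => b n ^ (if n < i.1 then β i.1 n else 0)) i'.1 := fun i' => rfl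
  rw [Finset.prod_congr rfl fun i' _ => this i',
    Fin.prod_univ_eq_prod_range (fun n => b n ^ (if n < i.1 then β i.1 n else 0)) (j + 1)]
  rw [← Finset.prod_subset (Finset.range_subset_range.2 (by omega : i.1 ≤ j + 1))
    (fun n _ hn => by
      rw [Finset.mem_range, not_lt] at hn
      simp [Nat.not_lt.2 hn])]
  exact Finset.prod_congr rfl fun n hn => by rw [if_pos (Finset.mem_range.1 hn)]

/-- generator `H_{i+1}` exactly as in the theorem statement. -/
def Gen (P : ℕ → ℕ) (c : ℕ → ℂ) (β : ℕ → ℕ → ℕ) (i : Fin (j + 1)) :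
    MvPolynomial (Fin (j + 1)) ℂ :=
  MvPolynomial.X i ^ P i.1 -
    MvPolynomial.C (c i.1) * MvPolynomial.X (0 : Fin (j + 1)) ^ β i.1 0 *
      ∏ i' : Fin (j + 1),
        if 1 ≤ i'.1 ∧ i'.1 < i.1 then MvPolynomial.X i' ^ β i.1 i'.1 else 1

lemma monomial_γ (β : ℕ → ℕ → ℕ) (i : Fin (j + 1)) (hi : 1 ≤ i.1) (a : ℂ) :
    (MvPolynomial.monomial (γ j β i) a : MvPolynomial (Fin (j + 1)) ℂ) =
      MvPolynomial.C a * MvPolynomial.X (0 : Fin (j + 1)) ^ β i.1 0 *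
        ∏ i' : Fin (j + 1),
          if 1 ≤ i'.1 ∧ i'.1 < i.1 then MvPolynomial.X i' ^ β i.1 i'.1 else 1 := by
  have h1 : (MvPolynomial.monomial (γ j β i) a : MvPolynomial (Fin (j + 1)) ℂ) =
      MvPolynomial.C a * ∏ i' : Fin (j + 1), MvPolynomial.X i' ^ (γ j β i i') := by
    rw [MvPolynomial.monomial_eq, Finsupp.prod_fintype]
    intro i'; exact pow_zero _
  rw [h1, mul_assoc]
  congr 1
  rw [Fin.prod_univ_succ]
  congr 1
  · rw [γ_apply]
    simp only [Fin.val_zero]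
    simp [show (0:ℕ) < i.1 by omega]
  · rw [Fin.prod_univ_succ, if_neg (by simp), one_mul]
    refine Finset.prod_congr rfl fun k _ => ?_
    rw [γ_apply]
    by_cases h : k.succ.1 < i.1
    · rw [if_pos h, if_pos ⟨by simp [Fin.val_succ], h⟩]
    · rw [if_neg h, if_neg (by tauto), pow_zero]

lemma Gen_eq (P : ℕ → ℕ) (c : ℕ → ℂ) (β : ℕ → ℕ → ℕ) (i : Fin (j + 1)) (hi : 1 ≤ i.1) :
    Gen j P c β i =
      MvPolynomial.monomial (Finsupp.single i (P i.1)) 1 -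
        MvPolynomial.monomial (γ j β i) (c i.1) := by
  rw [Gen, MvPolynomial.X_pow_eq_monomial, monomial_γ j β i hi]

lemma Psi_monomial (ω : ℕ → ℕ) (b : ℕ → ℂ) (d : Fin (j + 1) →₀ ℕ) (a : ℂ) :
    Psi j ω b (MvPolynomial.monomial d a) =
      Polynomial.C (a * B j b d) * Polynomial.X ^ W j ω d := by
  rw [Psi, MvPolynomial.aeval_monomial, Finsupp.prod_fintype _ _ (fun i => pow_zero _)]
  have : ∀ i : Fin (j + 1), (Polynomial.C (b i.1) * Polynomial.X ^ ω i.1) ^ d i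
      = Polynomial.C (b i.1 ^ d i) * Polynomial.X ^ (d i * ω i.1) := by
    intro i
    rw [mul_pow, ← Polynomial.C_pow, ← pow_mul, mul_comm (ω i.1)]
  rw [Finset.prod_congr rfl fun i _ => this i, Finset.prod_mul_distrib,
    ← map_prod (Polynomial.C : ℂ →+* Polynomial ℂ) _ _, prod_pow_eq_pow_sum]
  have ha : algebraMap ℂ (Polynomial ℂ) a = Polynomial.C a := rfl
  rw [ha, ← mul_assoc, ← Polynomial.C_mul]
  rfl

section Inj

variable (ω P : ℕ → ℕ)
variable (hP : ∀ i, 1 ≤ i → i ≤ j →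
  IsLeast {α : ℕ | 0 < α ∧ ∃ γ : ℕ → ℤ,
    (α : ℤ) * (ω i : ℤ) = ∑ i' ∈ Finset.range i, γ i' * (ω i' : ℤ)} (P i))

include hP in
lemma no_between (i₀ : ℕ) (h1 : 1 ≤ i₀) (h2 : i₀ ≤ j) (D E : ℕ → ℕ)
    (hD : D i₀ < P i₀) (hlt : E i₀ < D i₀)
    (hsum : (∑ n ∈ range i₀, D n * ω n) + D i₀ * ω i₀
      = (∑ n ∈ range i₀, E n * ω n) + E i₀ * ω i₀) : False := by
  set α := D i₀ - E i₀ with hα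
  have hαpos : 0 < α := by omega
  have hcast : (α : ℤ) * (ω i₀ : ℤ)
      = ∑ n ∈ range i₀, ((E n : ℤ) - (D n : ℤ)) * (ω n : ℤ) := by
    have hthis := congrArg (fun x : ℕ => (x : ℤ)) hsum
    push_cast at hthis
    have hsub : ∑ n ∈ range i₀, ((E n : ℤ) - (D n : ℤ)) * (ω n : ℤ)
        = (∑ n ∈ range i₀, (E n : ℤ) * (ω n : ℤ))
          - ∑ n ∈ range i₀, (D n : ℤ) * (ω n : ℤ) := by
      rw [← Finset.sum_sub_distrib]
      exact Finset.sum_congr rfl fun n _ => sub_mul _ _ _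
    rw [hsub, hα, Nat.cast_sub hlt.le, sub_mul]
    linarith
  have hle : P i₀ ≤ α := (hP i₀ h1 h2).2 ⟨hαpos, fun n => (E n : ℤ) - (D n : ℤ), hcast⟩
  omega

include hP in
lemma nat_inj (hω : ∀ i, i ≤ j → 0 < ω i) (D E : ℕ → ℕ)
    (hD : ∀ n, 1 ≤ n → n ≤ j → D n < P n) (hE : ∀ n, 1 ≤ n → n ≤ j → E n < P n)
    (hsum : ∑ n ∈ range (j + 1), D n * ω n = ∑ n ∈ range (j + 1), E n * ω n) :
    ∀ n, n ≤ j → D n = E n := by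
  by_contra hcon
  push_neg at hcon
  obtain ⟨n₀, hn₀j, hn₀⟩ := hcon
  set S := (range (j + 1)).filter (fun n => D n ≠ E n) with hS
  have hSne : S.Nonempty := ⟨n₀, Finset.mem_filter.2 ⟨Finset.mem_range.2 (by omega), hn₀⟩⟩
  set i₀ := S.max' hSne with hi₀
  have hmax : i₀ ∈ S := S.max'_mem hSne
  rw [hS, Finset.mem_filter, Finset.mem_range] at hmax
  obtain ⟨hi₀r, hi₀ne⟩ := hmax
  have hi₀j : i₀ ≤ j := by omega
  have hagree : ∀ m, i₀ < m → m < j + 1 → D m = E m := by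
    intro m hm hmj
    by_contra hne
    have : m ∈ S := Finset.mem_filter.2 ⟨Finset.mem_range.2 hmj, hne⟩
    have := Finset.le_max' S m this
    omega
  have hsum' : ∑ n ∈ range (i₀ + 1), D n * ω n = ∑ n ∈ range (i₀ + 1), E n * ω n := by
    have hsplitD : (∑ n ∈ range (i₀ + 1), D n * ω n)
        + ∑ n ∈ Finset.Ico (i₀ + 1) (j + 1), D n * ω n
        = ∑ n ∈ range (j + 1), D n * ω n := by
      simp only [Finset.range_eq_Ico]
      exact Finset.sum_Ico_consecutive _ (by omega) (by omega)
    have hsplitE : (∑ n ∈ range (i₀ + 1), E n * ω n)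
        + ∑ n ∈ Finset.Ico (i₀ + 1) (j + 1), E n * ω n
        = ∑ n ∈ range (j + 1), E n * ω n := by
      simp only [Finset.range_eq_Ico]
      exact Finset.sum_Ico_consecutive _ (by omega) (by omega)
    have htail : ∑ n ∈ Finset.Ico (i₀ + 1) (j + 1), D n * ω n
        = ∑ n ∈ Finset.Ico (i₀ + 1) (j + 1), E n * ω n := by
      refine Finset.sum_congr rfl fun n hn => ?_
      rw [Finset.mem_Ico] at hn
      rw [hagree n hn.1 hn.2]
    omega
  rw [Finset.sum_range_succ, Finset.sum_range_succ] at hsum'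
  rcases Nat.eq_zero_or_pos i₀ with h0 | hpos
  · rw [h0] at hsum'
    simp only [Finset.range_zero, Finset.sum_empty, zero_add] at hsum'
    have := hω 0 (Nat.zero_le j)
    have : D 0 = E 0 := Nat.eq_of_mul_eq_mul_right this hsum'
    rw [h0] at hi₀ne
    exact hi₀ne this
  · rcases Nat.lt_trichotomy (D i₀) (E i₀) with h | h | h
    · exact no_between j ω P hP i₀ hpos hi₀j E D (hE i₀ hpos hi₀j) h hsum'.symm
    · rcases Nat.lt_or_ge i₀ 1 with _ | _
      · omega
      · exact hi₀ne h
    · exact no_between j ω P hP i₀ hpos hi₀j D E (hD i₀ hpos hi₀j) h hsum'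

include hP in
lemma W_inj (hω : ∀ i, i ≤ j → 0 < ω i) (d e : Fin (j + 1) →₀ ℕ)
    (hd : ∀ i : Fin (j + 1), 1 ≤ i.1 → d i < P i.1)
    (he : ∀ i : Fin (j + 1), 1 ≤ i.1 → e i < P i.1)
    (hw : W j ω d = W j ω e) : d = e := by
  set D := fun n => if h : n < j + 1 then d ⟨n, h⟩ else 0 with hD
  set E := fun n => if h : n < j + 1 then e ⟨n, h⟩ else 0 with hE
  have hWD : W j ω d = ∑ n ∈ range (j + 1), D n * ω n := by
    rw [W, ← Fin.sum_univ_eq_sum_range (fun n => D n * ω n) (j + 1)]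
    exact Finset.sum_congr rfl fun i _ => by simp [hD]; intro h; exact absurd i.2 (by omega)
  have hWE : W j ω e = ∑ n ∈ range (j + 1), E n * ω n := by
    rw [W, ← Fin.sum_univ_eq_sum_range (fun n => E n * ω n) (j + 1)]
    exact Finset.sum_congr rfl fun i _ => by simp [hE]; intro h; exact absurd i.2 (by omega)
  have key := nat_inj j ω P hP hω D E
    (fun n h1 h2 => by simp only [hD]; rw [dif_pos (by omega)]; exact hd ⟨n, by omega⟩ h1)
    (fun n h1 h2 => by simp only [hE]; rw [dif_pos (by omega)]; exact he ⟨n, by omega⟩ h1)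
    (by rw [← hWD, ← hWE, hw])
  ext i
  have := key i.1 (by omega)
  simp only [hD, hE, dif_pos i.2] at this
  simpa using this

include hP in
lemma reduced_ker_eq_zero (hω : ∀ i, i ≤ j → 0 < ω i) (b : ℕ → ℂ)
    (hb : ∀ n, n ≤ j → b n ≠ 0) (r : MvPolynomial (Fin (j + 1)) ℂ)
    (hred : ∀ d ∈ r.support, ∀ i : Fin (j + 1), 1 ≤ i.1 → d i < P i.1)
    (hker : Psi j ω b r = 0) : r = 0 := by
  by_contra hne
  obtain ⟨d, hd⟩ := Finset.nonempty_iff_ne_empty.2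
    (fun h => hne (MvPolynomial.support_eq_empty.1 h))
  have hBne : ∀ e : Fin (j + 1) →₀ ℕ, B j b e ≠ 0 := by
    intro e
    rw [B]
    exact Finset.prod_ne_zero_iff.2 fun i _ => pow_ne_zero _ (hb i.1 (by omega))
  have hΨ : Psi j ω b r = ∑ d' ∈ r.support,
      Polynomial.C (MvPolynomial.coeff d' r * B j b d') * Polynomial.X ^ W j ω d' := by
    conv_lhs => rw [MvPolynomial.as_sum r]
    rw [map_sum]
    exact Finset.sum_congr rfl fun d' _ => Psi_monomial j ω b d' _
  have hcoeff := congrArg (fun p => Polynomial.coeff p (W j ω d)) hker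
  rw [hΨ] at hcoeff
  simp only [Polynomial.finset_sum_coeff, Polynomial.coeff_C_mul, Polynomial.coeff_X_pow,
    Polynomial.coeff_zero] at hcoeff
  rw [Finset.sum_eq_single d] at hcoeff
  · rw [if_pos rfl, mul_one] at hcoeff
    exact MvPolynomial.mem_support_iff.1 hd
      (by
        rcases mul_eq_zero.1 hcoeff with h | h
        · exact h
        · exact absurd h (hBne d))
  · intro d' hd' hne'
    rw [if_neg, mul_zero]
    intro hww
    exact hne' (W_inj j ω P hP hω d' d (fun i hi => hred d' hd' i hi)
      (fun i hi => hred d hd i hi) hww.symm)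
  · intro h; exact absurd hd h

end Inj

section Reduce

variable (ω P : ℕ → ℕ) (c : ℕ → ℂ) (β : ℕ → ℕ → ℕ) (Wt : ℕ → ℕ)
variable (I : Ideal (MvPolynomial (Fin (j + 1)) ℂ))

lemma reduce_monomial
    (hWgt : ∀ i, 1 ≤ i → i ≤ j → ∑ n ∈ range i, β i n * Wt n < Wt i)
    (hPpos : ∀ i, 1 ≤ i → i ≤ j → 0 < P i)
    (hgen : ∀ i : Fin (j + 1), 1 ≤ i.1 → Gen j P c β i ∈ I) :
    ∀ (N : ℕ) (d : Fin (j + 1) →₀ ℕ), W j Wt d = N →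
      ∃ r : MvPolynomial (Fin (j + 1)) ℂ,
        (∀ d' ∈ r.support, ∀ i : Fin (j + 1), 1 ≤ i.1 → d' i < P i.1) ∧
        MvPolynomial.monomial d 1 - r ∈ I := by
  intro N
  induction N using Nat.strong_induction_on with
  | _ N ih =>
    intro d hdN
    by_cases hred : ∀ i : Fin (j + 1), 1 ≤ i.1 → d i < P i.1
    · refine ⟨MvPolynomial.monomial d 1, ?_, by rw [sub_self]; exact I.zero_mem⟩
      intro d' hd'
      rw [MvPolynomial.support_monomial, if_neg one_ne_zero, Finset.mem_singleton] at hd'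
      rw [hd']
      exact hred
    · push_neg at hred
      obtain ⟨i, hi1, hiP⟩ := hred
      have hij : i.1 ≤ j := by omega
      have hle : Finsupp.single i (P i.1) ≤ d := Finsupp.single_le_iff.2 hiP
      set d'' := d - Finsupp.single i (P i.1) with hd''
      have hsum : d'' + Finsupp.single i (P i.1) = d := tsub_add_cancel_of_le hle
      set dnew := d'' + γ j β i with hdnew
      have hkey : MvPolynomial.monomial d 1 - MvPolynomial.monomial dnew (c i.1)
          = MvPolynomial.monomial d'' 1 * Gen j P c β i := by
        rw [Gen_eq j P c β i hi1, mul_sub, MvPolynomial.monomial_mul,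
          MvPolynomial.monomial_mul, hsum, one_mul, one_mul]
      have hμd : W j Wt d = W j Wt d'' + P i.1 * Wt i.1 := by
        rw [← hsum, W_add, W_single]
      have hμγ : W j Wt (γ j β i) < Wt i.1 := by
        rw [W_γ]
        exact hWgt i.1 hi1 hij
      have hWtpos : Wt i.1 ≤ P i.1 * Wt i.1 :=
        Nat.le_mul_of_pos_left _ (hPpos i.1 hi1 hij)
      have hμnew : W j Wt dnew < N := by
        rw [hdnew, W_add]
        omega
      obtain ⟨r', hred', hmem'⟩ := ih (W j Wt dnew) hμnew dnew rfl
      refine ⟨c i.1 • r', fun d' hd' => hred' d' (MvPolynomial.support_smul hd'), ?_⟩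
      have hsplit : MvPolynomial.monomial d 1 - c i.1 • r'
          = (MvPolynomial.monomial d 1 - MvPolynomial.monomial dnew (c i.1))
            + (MvPolynomial.C (c i.1) * (MvPolynomial.monomial dnew 1 - r')) := by
        rw [mul_sub, ← MvPolynomial.smul_eq_C_mul r', MvPolynomial.C_mul_monomial, mul_one]
        ring
      rw [hsplit]
      exact I.add_mem (hkey ▸ I.mul_mem_left _ (hgen i hi1))
        (I.mul_mem_left _ hmem')

lemma reduce_all
    (hWgt : ∀ i, 1 ≤ i → i ≤ j → ∑ n ∈ range i, β i n * Wt n < Wt i)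
    (hPpos : ∀ i, 1 ≤ i → i ≤ j → 0 < P i)
    (hgen : ∀ i : Fin (j + 1), 1 ≤ i.1 → Gen j P c β i ∈ I)
    (f : MvPolynomial (Fin (j + 1)) ℂ) :
    ∃ r : MvPolynomial (Fin (j + 1)) ℂ,
      (∀ d' ∈ r.support, ∀ i : Fin (j + 1), 1 ≤ i.1 → d' i < P i.1) ∧ f - r ∈ I := by
  have hmono := fun d : Fin (j + 1) →₀ ℕ =>
    reduce_monomial j P c β Wt I hWgt hPpos hgen (W j Wt d) d rfl
  choose rf hrf hrmem using hmono
  refine ⟨∑ d ∈ f.support, MvPolynomial.coeff d f • rf d, ?_, ?_⟩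
  · intro d' hd'
    have := MvPolynomial.support_sum hd'
    rw [Finset.mem_biUnion] at this
    obtain ⟨d, _, hd'2⟩ := this
    exact hrf d d' (MvPolynomial.support_smul hd'2)
  · have : ∑ d ∈ f.support, MvPolynomial.coeff d f •
            (MvPolynomial.monomial d 1 - rf d)
        = f - ∑ d ∈ f.support, MvPolynomial.coeff d f • rf d := by
      rw [Finset.sum_congr rfl (fun d _ => by
        rw [smul_sub, MvPolynomial.smul_monomial, smul_eq_mul, mul_one]),
        Finset.sum_sub_distrib, ← MvPolynomial.as_sum f]
    rw [← this]
    exact I.sum_mem fun d _ => by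
      rw [MvPolynomial.smul_eq_C_mul]
      exact I.mul_mem_left _ (hrmem d)

end Reduce

lemma exists_Wt (β : ℕ → ℕ → ℕ) :
    ∃ Wt : ℕ → ℕ, ∀ i, 1 ≤ i → i ≤ j → ∑ n ∈ range i, β i n * Wt n < Wt i := by
  set K := (∑ i ∈ range (j + 1), ∑ n ∈ range (j + 1), β i n) + 1 with hK
  set M := K * (j + 1) + 1 with hM
  have hM1 : 1 ≤ M := by omega
  refine ⟨fun n => M ^ n, fun i h1 h2 => ?_⟩
  have hβK : ∀ n, n < i → β i n ≤ K - 1 := by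
    intro n hn
    have h1' : ∑ n ∈ range (j + 1), β i n ≤ ∑ i ∈ range (j + 1), ∑ n ∈ range (j + 1), β i n :=
      Finset.single_le_sum (f := fun i => ∑ n ∈ range (j + 1), β i n)
        (fun _ _ => Nat.zero_le _) (Finset.mem_range.2 (by omega))
    have h2' : β i n ≤ ∑ n ∈ range (j + 1), β i n :=
      Finset.single_le_sum (fun _ _ => Nat.zero_le _) (Finset.mem_range.2 (by omega))
    omega
  have hbound : ∀ n ∈ range i, β i n * M ^ n ≤ (K - 1) * M ^ (i - 1) := by
    intro n hn
    rw [Finset.mem_range] at hn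
    exact Nat.mul_le_mul (hβK n hn) (Nat.pow_le_pow_right hM1 (by omega))
  calc ∑ n ∈ range i, β i n * M ^ n ≤ i * ((K - 1) * M ^ (i - 1)) := by
        have := Finset.sum_le_card_nsmul (range i) (fun n => β i n * M ^ n)
          ((K - 1) * M ^ (i - 1)) hbound
        rwa [Finset.card_range, smul_eq_mul] at this
    _ = (i * (K - 1)) * M ^ (i - 1) := by ring
    _ < M * M ^ (i - 1) := by
        refine Nat.mul_lt_mul_of_lt_of_le ?_ le_rfl (by positivity)
        calc i * (K - 1) ≤ (j + 1) * (K - 1) := Nat.mul_le_mul_right _ (by omega)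
          _ ≤ (j + 1) * K := Nat.mul_le_mul_left _ (Nat.sub_le _ _)
          _ = K * (j + 1) := mul_comm _ _
          _ < K * (j + 1) + 1 := Nat.lt_succ_self _
    _ = M ^ i := by
        rw [← pow_succ']
        congr 1
        omega

end SgpAux

/-- Lemma `semi-isomorphism`: let `j ≥ 1`, `ω₀, …, ω_j` positive integers, and for
`1 ≤ i ≤ j` let `P i` be the least positive integer `α` with
`α·ω_i ∈ ℤω₀ + ⋯ + ℤω_{i-1}`. Given nonzero `c_i ∈ ℂ` and nonnegative integers `β i i'`
with `β i i' < P i'` for `1 ≤ i' < i` and `P i · ω i = Σ_{i' < i} β i i' · ω i'`, set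
`H_{i+1} := y_i^{P i} − c_i·x^{β i 0}·y₁^{β i 1} ⋯ y_{i-1}^{β i (i-1)}` in
`ℂ[x, y₁, …, y_j]` (modeled as `MvPolynomial (Fin (j+1)) ℂ` with variable `0` playing
the role of `x` and variable `i ≥ 1` the role of `y_i`). Then there are nonzero constants
`b_i ∈ ℂ` such that the `ℂ`-algebra map `Ψ : ℂ[x, y₁, …, y_j] → ℂ[t]` with `Ψ(x) = t^{ω₀}`
and `Ψ(y_i) = b_i·t^{ω_i}` has kernel the ideal generated by `H₂, …, H_{j+1}` and range the
`ℂ`-subalgebra of `ℂ[t]` generated by `t^{ω₀}, …, t^{ω_j}`. -/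
theorem semigroup_ring_presentation (j : ℕ) (hj : 1 ≤ j)
    (ω : ℕ → ℕ) (hω : ∀ i, i ≤ j → 0 < ω i)
    (P : ℕ → ℕ)
    (hP : ∀ i, 1 ≤ i → i ≤ j →
      IsLeast {α : ℕ | 0 < α ∧ ∃ γ : ℕ → ℤ,
        (α : ℤ) * (ω i : ℤ) = ∑ i' ∈ Finset.range i, γ i' * (ω i' : ℤ)} (P i))
    (c : ℕ → ℂ) (hc : ∀ i, 1 ≤ i → i ≤ j → c i ≠ 0)
    (β : ℕ → ℕ → ℕ)
    (hβlt : ∀ i i', 1 ≤ i' → i' < i → i ≤ j → β i i' < P i')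
    (hβeq : ∀ i, 1 ≤ i → i ≤ j →
      (P i : ℤ) * (ω i : ℤ) = ∑ i' ∈ Finset.range i, (β i i' : ℤ) * (ω i' : ℤ)) :
    ∃ (b : ℕ → ℂ) (Ψ : MvPolynomial (Fin (j + 1)) ℂ →ₐ[ℂ] Polynomial ℂ),
      (∀ i, 1 ≤ i → i ≤ j → b i ≠ 0) ∧
      Ψ (MvPolynomial.X 0) = Polynomial.X ^ ω 0 ∧
      (∀ i : Fin (j + 1), 1 ≤ i.1 →
        Ψ (MvPolynomial.X i) = Polynomial.C (b i.1) * Polynomial.X ^ ω i.1) ∧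
      RingHom.ker Ψ.toRingHom =
        Ideal.span ((fun i : Fin (j + 1) =>
          MvPolynomial.X i ^ P i.1 -
            MvPolynomial.C (c i.1) * MvPolynomial.X (0 : Fin (j + 1)) ^ β i.1 0 *
              ∏ i' : Fin (j + 1),
                if 1 ≤ i'.1 ∧ i'.1 < i.1 then MvPolynomial.X i' ^ β i.1 i'.1 else 1)
          '' {i : Fin (j + 1) | 1 ≤ i.1}) ∧
      Ψ.range = Algebra.adjoin ℂ
        ((fun i : ℕ => (Polynomial.X : Polynomial ℂ) ^ ω i) '' {i : ℕ | i ≤ j}) := by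
  classical
  -- positivity of the `P i`
  have hPpos : ∀ i, 1 ≤ i → i ≤ j → 0 < P i := fun i h1 h2 => (hP i h1 h2).1.1
  -- ℕ-version of the exponent identity
  have hβeqN : ∀ i, 1 ≤ i → i ≤ j →
      P i * ω i = ∑ n ∈ Finset.range i, β i n * ω n := by
    intro i h1 h2
    have := hβeq i h1 h2
    exact_mod_cast this
  -- construct the constants b recursively
  have hbex : ∀ n, n ≤ j → ∃ b : ℕ → ℂ, b 0 = 1 ∧
      ∀ i, 1 ≤ i → i ≤ n → b i ≠ 0 ∧
        b i ^ P i = c i * ∏ m ∈ Finset.range i, b m ^ β i m := by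
    intro n
    induction n with
    | zero => exact fun _ => ⟨fun _ => 1, rfl, fun i h1 h2 => by omega⟩
    | succ n ihn =>
      intro hn
      obtain ⟨b, hb0, hb⟩ := ihn (by omega)
      have hprodne : (c (n + 1) * ∏ m ∈ Finset.range (n + 1), b m ^ β (n + 1) m) ≠ 0 := by
        refine mul_ne_zero (hc _ (by omega) hn) (Finset.prod_ne_zero_iff.2 fun m hm => ?_)
        rw [Finset.mem_range] at hm
        refine pow_ne_zero _ ?_
        rcases Nat.eq_zero_or_pos m with h | h
        · rw [h, hb0]; exact one_ne_zero
        · exact (hb m h (by omega)).1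
      obtain ⟨z, hz⟩ := IsAlgClosed.exists_pow_nat_eq
        (c (n + 1) * ∏ m ∈ Finset.range (n + 1), b m ^ β (n + 1) m)
        (hPpos (n + 1) (by omega) hn)
      refine ⟨Function.update b (n + 1) z, ?_, ?_⟩
      · rw [Function.update_of_ne (by omega)]; exact hb0
      · intro i h1 h2
        rcases Nat.lt_or_ge i (n + 1) with h | h
        · have hupd : ∀ m, m ≤ n → Function.update b (n + 1) z m = b m := fun m hm =>
            Function.update_of_ne (by omega) _ _
          obtain ⟨hbne, hbeq⟩ := hb i h1 (by omega)
          constructor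
          · rw [hupd i (by omega)]; exact hbne
          · rw [hupd i (by omega), hbeq]
            congr 1
            refine (Finset.prod_congr rfl fun m hm => ?_).symm
            rw [Finset.mem_range] at hm
            rw [hupd m (by omega)]
        · have hi : i = n + 1 := by omega
          subst hi
          have hupd : ∀ m, m ≤ n → Function.update b (n + 1) z m = b m := fun m hm =>
            Function.update_of_ne (by omega) _ _
          have hzval : Function.update b (n + 1) z (n + 1) = z := Function.update_self _ _ _
          constructor
          · rw [hzval]
            intro hz0
            rw [hz0, zero_pow (hPpos (n + 1) (by omega) hn).ne'] at hz
            exact hprodne hz.symm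
          · rw [hzval, hz]
            congr 1
            refine (Finset.prod_congr rfl fun m hm => ?_)
            rw [Finset.mem_range] at hm
            rw [hupd m (by omega)]
  obtain ⟨b, hb0, hbprop⟩ := hbex j le_rfl
  have hbne : ∀ n, n ≤ j → b n ≠ 0 := by
    intro n hn
    rcases Nat.eq_zero_or_pos n with h | h
    · rw [h, hb0]; exact one_ne_zero
    · exact (hbprop n h hn).1
  -- the weight function for termination of reduction
  obtain ⟨Wt, hWgt⟩ := SgpAux.exists_Wt j β
  -- hWgt needs the sum over range i of β i n * Wt n; but exists_Wt gives exactly that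
  set Ψ := SgpAux.Psi j ω b with hΨdef
  set I := Ideal.span ((fun i : Fin (j + 1) => SgpAux.Gen j P c β i)
    '' {i : Fin (j + 1) | 1 ≤ i.1}) with hIdef
  have hgen : ∀ i : Fin (j + 1), 1 ≤ i.1 → SgpAux.Gen j P c β i ∈ I := fun i hi =>
    Ideal.subset_span ⟨i, hi, rfl⟩
  -- Ψ kills the generators
  have hΨGen : ∀ i : Fin (j + 1), 1 ≤ i.1 → Ψ (SgpAux.Gen j P c β i) = 0 := by
    intro i hi
    have hij : i.1 ≤ j := by omega
    rw [hΨdef, SgpAux.Gen_eq j P c β i hi, map_sub, SgpAux.Psi_monomial,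
      SgpAux.Psi_monomial, SgpAux.W_single, SgpAux.B_single, SgpAux.W_γ,
      SgpAux.B_γ j b β i hij, one_mul, ← hβeqN i.1 hi hij,
      ← (hbprop i.1 hi hij).2, sub_self]
  -- span ≤ ker
  have hspanker : I ≤ RingHom.ker Ψ.toRingHom := by
    rw [hIdef, Ideal.span_le]
    rintro x ⟨i, hi, rfl⟩
    simp only [SetLike.mem_coe, RingHom.mem_ker]
    exact hΨGen i hi
  -- ker ≤ span
  have hkerspan : RingHom.ker Ψ.toRingHom ≤ I := by
    intro f hf
    obtain ⟨r, hred, hsub⟩ := SgpAux.reduce_all j P c β Wt I hWgt hPpos hgen f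
    have hΨf : Ψ f = 0 := hf
    have hΨfr : Ψ (f - r) = 0 := hspanker hsub
    have hΨr : Ψ r = 0 := by
      rw [map_sub] at hΨfr
      rw [hΨf] at hΨfr
      linear_combination -hΨfr
    have hr0 : r = 0 := SgpAux.reduced_ker_eq_zero j ω P hP hω b hbne r hred hΨr
    rw [hr0, sub_zero] at hsub
    exact hsub
  refine ⟨b, Ψ, fun i h1 h2 => hbne i h2, ?_, ?_, ?_, ?_⟩
  · show MvPolynomial.aeval _ (MvPolynomial.X 0) = _
    rw [MvPolynomial.aeval_X]
    show Polynomial.C (b 0) * _ = _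
    rw [hb0, map_one, one_mul]
    norm_num
  · intro i hi
    show MvPolynomial.aeval _ (MvPolynomial.X i) = _
    rw [MvPolynomial.aeval_X]
  · exact le_antisymm hkerspan hspanker
  · rw [hΨdef]
    show (MvPolynomial.aeval _).range = _
    rw [← Algebra.adjoin_range_eq_range_aeval]
    refine le_antisymm (Algebra.adjoin_le ?_) (Algebra.adjoin_le ?_)
    · rintro _ ⟨i, rfl⟩
      show Polynomial.C (b i.1) * Polynomial.X ^ ω i.1 ∈ _
      rw [← Polynomial.smul_eq_C_mul]
      refine Subalgebra.smul_mem _ (Algebra.subset_adjoin ?_) _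
      exact ⟨i.1, Nat.lt_succ_iff.1 i.2, rfl⟩
    · rintro _ ⟨n, hn, rfl⟩
      show (Polynomial.X : Polynomial ℂ) ^ ω n ∈ _
      have hmem : Polynomial.C (b n) * Polynomial.X ^ ω n ∈
          Algebra.adjoin ℂ (Set.range fun i : Fin (j + 1) =>
            Polynomial.C (b i.1) * Polynomial.X ^ ω i.1) :=
        Algebra.subset_adjoin ⟨⟨n, Nat.lt_succ_of_le hn⟩, rfl⟩
      have : (Polynomial.X : Polynomial ℂ) ^ ω n
          = (b n)⁻¹ • (Polynomial.C (b n) * Polynomial.X ^ ω n) := by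
        rw [← Polynomial.smul_eq_C_mul, smul_smul, inv_mul_cancel₀ (hbne n hn), one_smul]
      rw [this]
      exact Subalgebra.smul_mem _ hmem _
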